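/- Let ρ1 and ρ2 be n×n density matrices with eigenvalues λ_1(ρ1) ≥ … ≥ λ_n(ρ1) and λ_1(ρ2) ≥ … ≥ λ_n(ρ2). Then the minimum of F(ρ1, Φ(ρ2)) over all unital quantum channels Φ equals Σ_{j=1}^n √(λ_j(ρ1)) √(λ_{n−j+1}(ρ2)); that is, F(ρ1, Φ(ρ2)) ≥ Σ_{j=1}^n √(λ_j(ρ1) λ_{n−j+1}(ρ2)) for every unital channel Φ, with equality attained by a unitary channel. -/

import Mathlib

open Matrix
open scoped ComplexOrder Classical

/-- The vector of a tuple's entries sorted in decreasing (nonincreasing) order. -/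
noncomputable def sortDec {n : ℕ} (x : Fin n → ℝ) : Fin n → ℝ :=
  fun i => x (Tuple.sort x i.rev)

/-- The eigenvalues of a Hermitian matrix arranged in decreasing order,
`λ(A)`; junk value `0` if `A` is not Hermitian. -/
noncomputable def eigsDec {n : ℕ} (A : Matrix (Fin n) (Fin n) ℂ) : Fin n → ℝ :=
  if hA : A.IsHermitian then sortDec hA.eigenvalues else 0

/-- The eigenvalues of a Hermitian matrix arranged in increasing order. -/
noncomputable def eigsInc {n : ℕ} (A : Matrix (Fin n) (Fin n) ℂ) : Fin n → ℝ :=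
  fun i => eigsDec A i.rev

/-- `Λ↓(A)`: the diagonal matrix of the eigenvalues of `A` in decreasing order. -/
noncomputable def LambdaDown {n : ℕ} (A : Matrix (Fin n) (Fin n) ℂ) :
    Matrix (Fin n) (Fin n) ℂ :=
  Matrix.diagonal fun i => (eigsDec A i : ℂ)

/-- `Λ↑(A)`: the diagonal matrix of the eigenvalues of `A` in increasing order. -/
noncomputable def LambdaUp {n : ℕ} (A : Matrix (Fin n) (Fin n) ℂ) :
    Matrix (Fin n) (Fin n) ℂ :=
  Matrix.diagonal fun i => (eigsInc A i : ℂ)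

/-- `x ≺ y`: the sum of the `k` largest entries of `x` is at most that of `y`
for every `k`, with equality of the total sums. -/
def Majorizes {n : ℕ} (x y : Fin n → ℝ) : Prop :=
  (∀ k : ℕ, ∑ i ∈ Finset.univ.filter (fun i : Fin n => (i : ℕ) < k), sortDec x i ≤
      ∑ i ∈ Finset.univ.filter (fun i : Fin n => (i : ℕ) < k), sortDec y i) ∧
    (∑ i, x i) = ∑ i, y i

/-- A function `d` is Schur-convex if `x ≺ y` implies `d x ≤ d y`. -/
def SchurConvex {n : ℕ} (d : (Fin n → ℝ) → ℝ) : Prop :=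
  ∀ x y : Fin n → ℝ, Majorizes x y → d x ≤ d y

/-- A density matrix: positive semidefinite with trace one. -/
def IsDensityMatrix {n : ℕ} (ρ : Matrix (Fin n) (Fin n) ℂ) : Prop :=
  ρ.PosSemidef ∧ ρ.trace = 1

/-- A quantum channel: completely positive trace preserving map in Kraus form. -/
def IsQuantumChannel {n : ℕ}
    (Φ : Matrix (Fin n) (Fin n) ℂ → Matrix (Fin n) (Fin n) ℂ) : Prop :=
  ∃ (r : ℕ) (F : Fin r → Matrix (Fin n) (Fin n) ℂ),
    (∑ j, (F j)ᴴ * F j) = 1 ∧ ∀ X, Φ X = ∑ j, F j * X * (F j)ᴴ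

/-- A unital quantum channel. -/
def IsUnitalChannel {n : ℕ}
    (Φ : Matrix (Fin n) (Fin n) ℂ → Matrix (Fin n) (Fin n) ℂ) : Prop :=
  IsQuantumChannel Φ ∧ Φ 1 = 1

/-- A mixed unitary channel: a convex combination of unitary conjugations. -/
def IsMixedUnitaryChannel {n : ℕ}
    (Φ : Matrix (Fin n) (Fin n) ℂ → Matrix (Fin n) (Fin n) ℂ) : Prop :=
  ∃ (r : ℕ) (t : Fin r → ℝ) (U : Fin r → Matrix (Fin n) (Fin n) ℂ),
    (∀ j, 0 ≤ t j) ∧ (∑ j, t j) = 1 ∧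
      (∀ j, U j ∈ Matrix.unitaryGroup (Fin n) ℂ) ∧
      ∀ X, Φ X = ∑ j, (t j : ℂ) • (U j * X * (U j)ᴴ)

/-- Functional calculus: `f(A)` for a Hermitian matrix `A`, via the spectral theorem;
junk value `0` if `A` is not Hermitian. -/
noncomputable def matFun {n : ℕ} (f : ℝ → ℝ) (A : Matrix (Fin n) (Fin n) ℂ) :
    Matrix (Fin n) (Fin n) ℂ :=
  if hA : A.IsHermitian then
    (hA.eigenvectorUnitary : Matrix (Fin n) (Fin n) ℂ) *
      Matrix.diagonal (fun i => (f (hA.eigenvalues i) : ℂ)) *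
      (hA.eigenvectorUnitary : Matrix (Fin n) (Fin n) ℂ)ᴴ
  else 0

/-- The square root of a PSD matrix, as `Matrix.PosSemidef.sqrt` was defined in the older Mathlib. -/
noncomputable def posSemidefSqrtOld {n : ℕ} {A : Matrix (Fin n) (Fin n) ℂ} (hA : A.PosSemidef) :
    Matrix (Fin n) (Fin n) ℂ :=
  hA.1.eigenvectorUnitary.1 * diagonal ((↑) ∘ (√·) ∘ hA.1.eigenvalues) *
    (star hA.1.eigenvectorUnitary : Matrix (Fin n) (Fin n) ℂ)

/-- `|A| = (AᴴA)^{1/2}`. -/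
noncomputable def matAbs {n : ℕ} (A : Matrix (Fin n) (Fin n) ℂ) :
    Matrix (Fin n) (Fin n) ℂ :=
  posSemidefSqrtOld (Matrix.posSemidef_conjTranspose_mul_self A)

/-- `tr|A|`, the sum of the singular values of `A`. -/
noncomputable def traceAbs {n : ℕ} (A : Matrix (Fin n) (Fin n) ℂ) : ℝ :=
  ((matAbs A).trace).re

/-- The singular values of `A` in decreasing order. -/
noncomputable def singVals {n : ℕ} (A : Matrix (Fin n) (Fin n) ℂ) : Fin n → ℝ :=
  eigsDec (matAbs A)

/-- The positive semidefinite square root of a PSD matrix (junk value `0` otherwise). -/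
noncomputable def matSqrt {n : ℕ} (A : Matrix (Fin n) (Fin n) ℂ) :
    Matrix (Fin n) (Fin n) ℂ :=
  if hA : A.PosSemidef then posSemidefSqrtOld hA else 0

/-- The fidelity `F(ρ,σ) = tr|ρ^{1/2} σ^{1/2}|`. -/
noncomputable def fidelity {n : ℕ} (ρ σ : Matrix (Fin n) (Fin n) ℂ) : ℝ :=
  traceAbs (matSqrt ρ * matSqrt σ)

/-- The relative entropy `S(ρ‖σ) = tr(ρ (log ρ - log σ))`. -/
noncomputable def relEntropy {n : ℕ} (ρ σ : Matrix (Fin n) (Fin n) ℂ) : ℝ :=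
  ((ρ * (matFun Real.log ρ - matFun Real.log σ)).trace).re

/-- The (real) trace of a matrix whose trace is real. -/
noncomputable def trR {n : ℕ} (A : Matrix (Fin n) (Fin n) ℂ) : ℝ := A.trace.re

namespace Stmt14

section OldSqrt
open scoped MatrixOrder

lemma posSemidefSqrtOld_eq {n : ℕ} {A : Matrix (Fin n) (Fin n) ℂ} (hA : A.PosSemidef) :
    posSemidefSqrtOld hA = CFC.sqrt A := by
  rw [CFC.sqrt_eq_cfc, cfc_nnreal_eq_real _ A hA.nonneg, hA.1.cfc_eq, IsHermitian.cfc,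
    posSemidefSqrtOld, Unitary.conjStarAlgAut_apply]
  congr 2
  funext i
  ext j
  simp only [diagonal_apply, Function.comp_apply, Real.coe_sqrt, Real.coe_toNNReal',
    max_eq_left (hA.eigenvalues_nonneg i)]
  split_ifs <;> rfl

lemma sqrtOld_psd {n : ℕ} {A : Matrix (Fin n) (Fin n) ℂ} (hA : A.PosSemidef) :
    (posSemidefSqrtOld hA).PosSemidef := by
  rw [posSemidefSqrtOld_eq]; exact (CFC.sqrt_nonneg A).posSemidef

lemma sqrtOld_sq {n : ℕ} {A : Matrix (Fin n) (Fin n) ℂ} (hA : A.PosSemidef) :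
    (posSemidefSqrtOld hA) ^ 2 = A := by
  rw [posSemidefSqrtOld_eq]; exact CFC.sq_sqrt A hA.nonneg

lemma eq_sqrtOld_of_sq_eq {n : ℕ} {A : Matrix (Fin n) (Fin n) ℂ} {hA : A.PosSemidef}
    {B : Matrix (Fin n) (Fin n) ℂ} (hB : B.PosSemidef) (hBA : B ^ 2 = A) :
    B = posSemidefSqrtOld hA := by
  rw [posSemidefSqrtOld_eq]
  exact ((CFC.sqrt_eq_iff A B hA.nonneg hB.nonneg).mpr (by rw [← hBA, sq])).symm

end OldSqrt


/-- Bottom-`k` style partial sum of a tuple (in given order). -/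
noncomputable def S {n : ℕ} (f : Fin n → ℝ) (k : ℕ) : ℝ :=
  ∑ i ∈ Finset.univ.filter (fun i : Fin n => (i : ℕ) < k), f i

lemma S_eq_range {n : ℕ} (f : Fin n → ℝ) (k : ℕ) :
    S f k = ∑ m ∈ Finset.range k, (if h : m < n then f ⟨m, h⟩ else 0) := by
  induction k with
  | zero => simp [S]
  | succ k ih =>
    rw [Finset.sum_range_succ, ← ih]
    by_cases h : k < n
    · have hins : (Finset.univ.filter (fun i : Fin n => (i : ℕ) < k + 1))
          = insert (⟨k, h⟩ : Fin n) (Finset.univ.filter (fun i : Fin n => (i : ℕ) < k)) := by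
        ext i
        simp only [Finset.mem_filter, Finset.mem_univ, true_and, Finset.mem_insert]
        constructor
        · intro hi
          rcases Nat.lt_succ_iff_lt_or_eq.mp hi with h' | h'
          · exact Or.inr h'
          · exact Or.inl (by ext; exact h')
        · rintro (rfl | hi)
          · exact Nat.lt_succ_self k
          · exact hi.trans (Nat.lt_succ_self k)
      rw [S, hins, Finset.sum_insert (by simp), dif_pos h]
      rw [add_comm]
      rfl
    · have : (Finset.univ.filter (fun i : Fin n => (i : ℕ) < k + 1))
          = (Finset.univ.filter (fun i : Fin n => (i : ℕ) < k)) := by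
        apply Finset.filter_congr
        intro i _
        have hi : (i : ℕ) < n := i.2
        have hkn : n ≤ k := le_of_not_gt h
        simp [Nat.lt_succ_iff, Nat.lt_of_lt_of_le hi hkn, le_of_lt (Nat.lt_of_lt_of_le hi hkn)]
      rw [S, this, dif_neg h, add_zero]
      rfl

lemma S_sat {n : ℕ} (f : Fin n → ℝ) {k : ℕ} (hk : n ≤ k) : S f k = S f n := by
  unfold S
  apply Finset.sum_congr _ (fun _ _ => rfl)
  apply Finset.filter_congr
  intro i _
  simp [i.2, Nat.lt_of_lt_of_le i.2 hk]

lemma S_full {n : ℕ} (f : Fin n → ℝ) : S f n = ∑ i, f i := by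
  unfold S
  rw [Finset.filter_true_of_mem (fun i _ => i.2)]

lemma S_sub {n : ℕ} (f g : Fin n → ℝ) (k : ℕ) : S (fun i => f i - g i) k = S f k - S g k := by
  unfold S; rw [Finset.sum_sub_distrib]

lemma S_nonneg {n : ℕ} (f : Fin n → ℝ) (hf : ∀ i, 0 ≤ f i) (k : ℕ) : 0 ≤ S f k :=
  Finset.sum_nonneg fun i _ => hf i

lemma S_mono_k {n : ℕ} (f : Fin n → ℝ) (hf : ∀ i, 0 ≤ f i) {k l : ℕ} (hkl : k ≤ l) :
    S f k ≤ S f l := by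
  unfold S
  apply Finset.sum_le_sum_of_subset_of_nonneg
  · intro i hi
    simp only [Finset.mem_filter, Finset.mem_univ, true_and] at hi ⊢
    exact lt_of_lt_of_le hi hkl
  · exact fun i _ _ => hf i

/-- Abel summation nonnegativity on an interval. -/
lemma abel_nat (g e : ℕ → ℝ) (l k : ℕ)
    (hg0 : ∀ m, 0 ≤ g m)
    (hganti : ∀ m m', l ≤ m → m ≤ m' → m' ≤ k → g m' ≤ g m)
    (hE : ∀ m, m ≤ k → 0 ≤ ∑ i ∈ Finset.Ico l m, e i) :
    0 ≤ ∑ i ∈ Finset.Ico l k, g i * e i := by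
  rcases le_or_gt l k with hlk | hlk
  · have key : ∀ K, l ≤ K → K ≤ k →
        ∑ i ∈ Finset.Ico l K, g i * e i
          = (∑ i ∈ Finset.Ico l K, (g i - g (i + 1)) * (∑ j ∈ Finset.Ico l (i + 1), e j))
            + g K * (∑ j ∈ Finset.Ico l K, e j) := by
      intro K hK
      induction K, hK using Nat.le_induction with
      | base => intro _; simp
      | succ K hK ih =>
        intro hK1
        have hKk : K ≤ k := le_of_lt hK1
        rw [Finset.sum_Ico_succ_top hK, Finset.sum_Ico_succ_top hK, ih hKk,
          Finset.sum_Ico_succ_top hK]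
        ring
    rw [key k hlk le_rfl]
    have h1 : 0 ≤ ∑ i ∈ Finset.Ico l k, (g i - g (i + 1)) * (∑ j ∈ Finset.Ico l (i + 1), e j) := by
      apply Finset.sum_nonneg
      intro i hi
      rw [Finset.mem_Ico] at hi
      apply mul_nonneg
      · have := hganti i (i + 1) hi.1 (Nat.le_succ i) hi.2
        linarith
      · exact hE (i + 1) hi.2
    have h2 : 0 ≤ g k * (∑ j ∈ Finset.Ico l k, e j) := mul_nonneg (hg0 k) (hE k le_rfl)
    linarith
  · rw [Finset.Ico_eq_empty (by omega)]
    simp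

/-- extension of a tuple to ℕ by zero -/
noncomputable def ext {n : ℕ} (f : Fin n → ℝ) : ℕ → ℝ :=
  fun m => if h : m < n then f ⟨m, h⟩ else 0

lemma S_eq_ext {n : ℕ} (f : Fin n → ℝ) (k : ℕ) : S f k = ∑ m ∈ Finset.range k, ext f m :=
  S_eq_range f k

/-- Abel summation for tuples: antitone nonnegative weights preserve partial-sum dominance. -/
lemma abel_fin {n : ℕ} (a e : Fin n → ℝ) (ha : Antitone a) (ha0 : ∀ i, 0 ≤ a i)
    (he : ∀ k, 0 ≤ S e k) : 0 ≤ ∑ i, a i * e i := by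
  have hconv : ∑ i, a i * e i = ∑ m ∈ Finset.Ico 0 n, ext a m * ext e m := by
    rw [← Finset.range_eq_Ico, ← S_full (fun i => a i * e i), S_eq_ext]
    apply Finset.sum_congr rfl
    intro i _
    unfold ext
    by_cases h : i < n <;> simp [h]
  rw [hconv]
  apply abel_nat _ _ 0 n
  · intro m
    unfold ext
    by_cases h : m < n
    · simp only [dif_pos h]; exact ha0 _
    · simp [h]
  · intro m m' _ hmm' _
    unfold ext
    by_cases h' : m' < n
    · have h : m < n := lt_of_le_of_lt hmm' h'
      simp only [dif_pos h, dif_pos h']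
      exact ha (by simpa [Fin.le_def] using hmm')
    · simp only [dif_neg h']
      by_cases h : m < n
      · simp only [dif_pos h]; exact ha0 _
      · simp [h]
  · intro m _
    rw [← Finset.range_eq_Ico, ← S_eq_ext]
    exact he m




lemma S_one {n : ℕ} {k : ℕ} (hk : k ≤ n) :
    S (fun _ : Fin n => (1 : ℝ)) k = k := by
  rw [S_eq_range]
  rw [Finset.sum_congr rfl (fun m hm => ?_), Finset.sum_const, Finset.card_range,
    nsmul_eq_mul, mul_one]
  rw [dif_pos (lt_of_lt_of_le (Finset.mem_range.mp hm) hk)]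

/-- The LP lemma. -/
lemma lp {n : ℕ} (b c : Fin n → ℝ) (hb : Monotone b)
    (hc0 : ∀ i, 0 ≤ c i) (hc1 : ∀ i, c i ≤ 1) (k : ℕ) (hk : k ≤ n)
    (hsum : ∑ i, c i = k) : S b k ≤ ∑ i, c i * b i := by
  rcases eq_or_lt_of_le hk with rfl | hkn
  · -- k = n : all c i = 1
    have hc : ∀ i, c i = 1 := by
      have h0 : ∑ i, (1 - c i) = 0 := by
        rw [Finset.sum_sub_distrib, hsum, Finset.sum_const, Finset.card_univ, Fintype.card_fin,
          nsmul_eq_mul, mul_one, sub_self]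
      intro i
      have := (Finset.sum_eq_zero_iff_of_nonneg (fun j _ => by linarith [hc1 j])).mp h0 i
        (Finset.mem_univ i)
      linarith
    rw [S_full]
    apply le_of_eq
    exact Finset.sum_congr rfl (fun i _ => by rw [hc i, one_mul])
  · -- k < n
    set t := b ⟨k, hkn⟩ with ht
    set P := Finset.univ.filter (fun i : Fin n => (i : ℕ) < k) with hP
    have hsplit : ∑ i, c i * b i
        = ∑ i ∈ P, c i * b i + ∑ i ∈ Finset.univ.filter (fun i : Fin n => ¬ ((i : ℕ) < k)), c i * b i := by
      exact (Finset.sum_filter_add_sum_filter_not _ _ _).symm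
    have hcP : ∑ i ∈ P, c i + ∑ i ∈ Finset.univ.filter (fun i : Fin n => ¬ ((i : ℕ) < k)), c i = k := by
      rw [Finset.sum_filter_add_sum_filter_not]; exact hsum
    have hSone : ∑ i ∈ P, (1 : ℝ) = k := S_one hk
    -- S b k - ∑_P c b ≤ t * (k - ∑_P c) = t * ∑_notP c ≤ ∑_notP c b
    have h1 : S b k - ∑ i ∈ P, c i * b i ≤ t * (k - ∑ i ∈ P, c i) := by
      have : S b k - ∑ i ∈ P, c i * b i = ∑ i ∈ P, (1 - c i) * b i := by
        unfold S; rw [← hP, ← Finset.sum_sub_distrib]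
        exact Finset.sum_congr rfl (fun i _ => by ring)
      rw [this]
      have h2' : t * ((k : ℝ) - ∑ i ∈ P, c i) = ∑ i ∈ P, (1 - c i) * t := by
        rw [← hSone, ← Finset.sum_sub_distrib, Finset.mul_sum]
        exact Finset.sum_congr rfl (fun i _ => by ring)
      rw [h2']
      apply Finset.sum_le_sum
      intro i hi
      have hik : (i : ℕ) < k := by
        rw [hP] at hi; simpa using hi
      have hbt : b i ≤ t := hb (by rw [Fin.le_def]; exact le_of_lt hik)
      have : 0 ≤ 1 - c i := by linarith [hc1 i]
      nlinarith
    have h2 : t * (k - ∑ i ∈ P, c i)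
        ≤ ∑ i ∈ Finset.univ.filter (fun i : Fin n => ¬ ((i : ℕ) < k)), c i * b i := by
      have hknot : (k : ℝ) - ∑ i ∈ P, c i
          = ∑ i ∈ Finset.univ.filter (fun i : Fin n => ¬ ((i : ℕ) < k)), c i := by
        linarith
      rw [hknot, Finset.mul_sum]
      apply Finset.sum_le_sum
      intro i hi
      have hik : k ≤ (i : ℕ) := by
        simp only [Finset.mem_filter, Finset.mem_univ, true_and, not_lt] at hi; exact hi
      have hbt : t ≤ b i := hb (by rw [Fin.le_def]; exact hik)
      nlinarith [hc0 i]
    rw [hsplit]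
    linarith





lemma sqrt_transfer {n : ℕ} (μ ν : Fin n → ℝ) (hν : Monotone ν)
    (hμ0 : ∀ i, 0 ≤ μ i) (hν0 : ∀ i, 0 ≤ ν i)
    (h : ∀ k, S μ k ≤ S ν k) (k : ℕ) :
    S (fun i => Real.sqrt (μ i)) k ≤ S (fun i => Real.sqrt (ν i)) k := by
  -- zeros of ν force zeros of μ
  have hz : ∀ i : Fin n, ν i = 0 → μ i = 0 := by
    intro i hi
    have hν0' : S ν ((i : ℕ) + 1) = 0 := by
      apply Finset.sum_eq_zero
      intro j hj
      have hji : (j : ℕ) < (i : ℕ) + 1 := by simpa using hj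
      have : ν j ≤ ν i := hν (by rw [Fin.le_def]; omega)
      have := hν0 j
      linarith [hi ▸ this]
    have hμle : S μ ((i : ℕ) + 1) ≤ 0 := by rw [← hν0']; exact h _
    have hμz : S μ ((i : ℕ) + 1) = 0 :=
      le_antisymm hμle (Finset.sum_nonneg fun j _ => hμ0 j)
    have := (Finset.sum_eq_zero_iff_of_nonneg (fun j _ => hμ0 j)).mp hμz i
      (by simp)
    exact this
  -- the threshold index
  obtain ⟨m0, hm0⟩ : ∃ m0 : ℕ, ∀ i : Fin n, ν i = 0 ↔ (i : ℕ) < m0 := by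
    classical
    by_cases hP : (Finset.univ.filter (fun i : Fin n => ν i ≠ 0)) = ∅
    · refine ⟨n, fun i => ?_⟩
      have : ν i = 0 := by
        by_contra hne
        have : i ∈ Finset.univ.filter (fun i : Fin n => ν i ≠ 0) := by simp [hne]
        rw [hP] at this; exact absurd this (Finset.notMem_empty i)
      simp [this, i.2]
    · have hne : (Finset.univ.filter (fun i : Fin n => ν i ≠ 0)).Nonempty :=
        Finset.nonempty_of_ne_empty hP
      set j0 := (Finset.univ.filter (fun i : Fin n => ν i ≠ 0)).min' hne with hj0
      refine ⟨(j0 : ℕ), fun i => ?_⟩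
      constructor
      · intro hi
        by_contra hge
        push_neg at hge
        have hj0i : j0 ≤ i := by rw [Fin.le_def]; exact hge
        have hνj0 : ν j0 ≠ 0 := by
          have := (Finset.univ.filter (fun i : Fin n => ν i ≠ 0)).min'_mem hne
          simpa using this
        have : ν j0 ≤ ν i := hν hj0i
        have := hν0 j0
        exact hνj0 (by linarith [hi ▸ this])
      · intro hi
        by_contra hne'
        have : i ∈ Finset.univ.filter (fun i : Fin n => ν i ≠ 0) := by simp [hne']
        have := Finset.min'_le _ i this
        rw [← hj0, Fin.le_def] at this
        omega
  -- δ and the pointwise tangent bound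
  set δ : Fin n → ℝ := fun i => if ν i = 0 then 0 else (2 * Real.sqrt (ν i))⁻¹ with hδ
  have hδ0 : ∀ i, 0 ≤ δ i := by
    intro i; rw [hδ]
    by_cases hi : ν i = 0 <;> simp [hi]
  have hpt : ∀ i : Fin n, δ i * (ν i - μ i) ≤ Real.sqrt (ν i) - Real.sqrt (μ i) := by
    intro i
    by_cases hi : ν i = 0
    · rw [hδ]; simp [hi, hz i hi]
    · have hpos : 0 < ν i := lt_of_le_of_ne (hν0 i) (Ne.symm hi)
      set s := Real.sqrt (ν i) with hs
      set m := Real.sqrt (μ i) with hm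
      have hspos : 0 < s := Real.sqrt_pos.mpr hpos
      have hs2 : s * s = ν i := Real.mul_self_sqrt (hν0 i)
      have hm2 : m * m = μ i := Real.mul_self_sqrt (hμ0 i)
      have hm0' : 0 ≤ m := Real.sqrt_nonneg _
      have key : ν i - μ i ≤ (s - m) * (2 * s) := by nlinarith [sq_nonneg (s - m)]
      have : δ i = (2 * s)⁻¹ := by rw [hδ]; simp [hi, hs]
      rw [this]
      calc (2 * s)⁻¹ * (ν i - μ i) ≤ (2 * s)⁻¹ * ((s - m) * (2 * s)) := by
            apply mul_le_mul_of_nonneg_left key (by positivity)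
        _ = s - m := by field_simp
  -- reduce to a positive combination
  rw [← sub_nonneg, ← S_sub]
  have step1 : S (fun i => δ i * (ν i - μ i)) k
      ≤ S (fun i => Real.sqrt (ν i) - Real.sqrt (μ i)) k := by
    unfold S
    exact Finset.sum_le_sum fun i _ => hpt i
  refine le_trans ?_ step1
  rw [S_eq_ext]
  have hext : ∀ m, ext (fun i => δ i * (ν i - μ i)) m
      = ext δ m * ext (fun i => ν i - μ i) m := by
    intro m
    unfold ext
    by_cases hmn : m < n <;> simp [hmn]
  rw [Finset.sum_congr rfl (fun m _ => hext m), Finset.range_eq_Ico]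
  set l := min m0 k with hl
  rw [← Finset.sum_Ico_consecutive _ (Nat.zero_le l) (min_le_right m0 k)]
  have hfirst : ∑ m ∈ Finset.Ico 0 l, ext δ m * ext (fun i => ν i - μ i) m = 0 := by
    apply Finset.sum_eq_zero
    intro m hm
    have hml : m < l := by simpa using hm
    have hmm0 : m < m0 := lt_of_lt_of_le hml (min_le_left _ _)
    unfold ext
    by_cases hmn : m < n
    · have hν2 : ν ⟨m, hmn⟩ = 0 := (hm0 ⟨m, hmn⟩).mpr hmm0
      have hμ2 : μ ⟨m, hmn⟩ = 0 := hz _ hν2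
      simp [hmn, hν2, hμ2]
    · simp [hmn]
  rw [hfirst, zero_add]
  -- Abel summation on [l, k)
  apply abel_nat
  · intro m
    unfold ext
    by_cases hmn : m < n
    · simp only [dif_pos hmn]; exact hδ0 _
    · simp [hmn]
  · intro m m' hlm hmm' hm'k
    rcases eq_or_lt_of_le hmm' with rfl | hlt
    · exact le_refl _
    have hm0m : m0 ≤ m := by
      rcases le_or_gt m0 k with hc | hc
      · have : l = m0 := min_eq_left hc
        omega
      · have : l = k := min_eq_right (le_of_lt hc)
        omega
    unfold ext
    by_cases hm'n : m' < n
    · have hmn : m < n := lt_trans hlt hm'n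
      simp only [dif_pos hmn, dif_pos hm'n]
      have hνm : ν ⟨m, hmn⟩ ≠ 0 := by
        intro hcon
        have h2 : m < m0 := (hm0 ⟨m, hmn⟩).mp hcon
        omega
      have hνm' : ν ⟨m', hm'n⟩ ≠ 0 := by
        intro hcon
        have h2 : m' < m0 := (hm0 ⟨m', hm'n⟩).mp hcon
        omega
      have hp : 0 < ν ⟨m, hmn⟩ := lt_of_le_of_ne (hν0 _) (Ne.symm hνm)
      have hle : ν ⟨m, hmn⟩ ≤ ν ⟨m', hm'n⟩ := hν (by rw [Fin.le_def]; exact le_of_lt hlt)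
      rw [hδ]
      simp only [if_neg hνm, if_neg hνm']
      apply inv_anti₀ (by positivity)
      have := Real.sqrt_le_sqrt hle
      linarith
    · simp only [dif_neg hm'n]
      by_cases hmn : m < n
      · simp only [dif_pos hmn]; exact hδ0 _
      · simp [hmn]
  · intro m hmk
    rcases le_or_gt l m with hlm | hlm
    · have hzero : ∑ i ∈ Finset.Ico 0 l, ext (fun i => ν i - μ i) i = 0 := by
        apply Finset.sum_eq_zero
        intro j hj
        have hjl : j < l := by simpa using hj
        have hjm0 : j < m0 := lt_of_lt_of_le hjl (min_le_left _ _)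
        unfold ext
        by_cases hjn : j < n
        · have hν2 : ν ⟨j, hjn⟩ = 0 := (hm0 ⟨j, hjn⟩).mpr hjm0
          simp [hjn, hν2, hz _ hν2]
        · simp [hjn]
      have heq : ∑ i ∈ Finset.Ico l m, ext (fun i => ν i - μ i) i
          = ∑ i ∈ Finset.Ico 0 m, ext (fun i => ν i - μ i) i := by
        rw [← Finset.sum_Ico_consecutive _ (Nat.zero_le l) hlm, hzero, zero_add]
      rw [heq, ← Finset.range_eq_Ico, ← S_eq_ext, S_sub, sub_nonneg]
      exact h m
    · rw [Finset.Ico_eq_empty (by omega)]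
      simp



lemma sortDec_antitone {n : ℕ} (x : Fin n → ℝ) : Antitone (sortDec x) := by
  intro i j hij
  have := Tuple.monotone_sort x (show j.rev ≤ i.rev from Fin.rev_le_rev.mpr hij)
  exact this

/-- `sortDec x` is `x` composed with a permutation. -/
lemma sortDec_eq_comp {n : ℕ} (x : Fin n → ℝ) :
    sortDec x = x ∘ ((Fin.revPerm).trans (Tuple.sort x)) := rfl

lemma multiset_comp_perm {n : ℕ} {α : Type*} (x : Fin n → α) (σ : Equiv.Perm (Fin n)) :
    Multiset.map (x ∘ σ) Finset.univ.val = Multiset.map x Finset.univ.val := by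
  rw [← Multiset.map_map]
  congr 1
  have : Multiset.map (⇑σ) Finset.univ.val = (Finset.univ.map σ.toEmbedding).val := rfl
  rw [this, Finset.map_univ_equiv]

lemma multiset_sortDec {n : ℕ} (x : Fin n → ℝ) :
    Multiset.map (sortDec x) Finset.univ.val = Multiset.map x Finset.univ.val := by
  rw [sortDec_eq_comp]
  exact multiset_comp_perm x _

/-- Two antitone tuples with equal multisets of values are equal. -/
lemma antitone_unique {n : ℕ} {y₁ y₂ : Fin n → ℝ} (h₁ : Antitone y₁) (h₂ : Antitone y₂)
    (h : Multiset.map y₁ Finset.univ.val = Multiset.map y₂ Finset.univ.val) : y₁ = y₂ := by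
  have hmono₁ : Monotone (y₁ ∘ ⇑(Fin.revPerm : Equiv.Perm (Fin n))) := by
    intro i j hij
    exact h₁ (by simpa [Fin.rev_le_rev] using hij)
  have hmono₂ : Monotone (y₂ ∘ ⇑(Fin.revPerm : Equiv.Perm (Fin n))) := by
    intro i j hij
    exact h₂ (by simpa [Fin.rev_le_rev] using hij)
  have hperm : (List.ofFn (y₁ ∘ ⇑(Fin.revPerm : Equiv.Perm (Fin n)))).Perm
      (List.ofFn (y₂ ∘ ⇑(Fin.revPerm : Equiv.Perm (Fin n)))) := by
    rw [← Multiset.coe_eq_coe]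
    have e1 := multiset_comp_perm y₁ (Fin.revPerm : Equiv.Perm (Fin n))
    have e2 := multiset_comp_perm y₂ (Fin.revPerm : Equiv.Perm (Fin n))
    have hofFn : ∀ (f : Fin n → ℝ), (↑(List.ofFn f) : Multiset ℝ) = Multiset.map f Finset.univ.val := by
      intro f
      rw [List.ofFn_eq_map]
      rfl
    rw [hofFn, hofFn, e1, e2, h]
  have := List.Perm.eq_of_sortedLE hmono₁.sortedLE_ofFn hmono₂.sortedLE_ofFn hperm
  have heq := List.ofFn_injective this
  funext i
  have := congr_fun heq (i.rev)
  simpa using this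

lemma sortDec_unique {n : ℕ} {x y : Fin n → ℝ} (hy : Antitone y)
    (h : Multiset.map x Finset.univ.val = Multiset.map y Finset.univ.val) : sortDec x = y :=
  antitone_unique (sortDec_antitone x) hy ((multiset_sortDec x).trans h)

lemma sortDec_comp_monotone {n : ℕ} (x : Fin n → ℝ) {g : ℝ → ℝ} (hg : Monotone g) :
    sortDec (fun i => g (x i)) = fun i => g (sortDec x i) := by
  apply sortDec_unique
  · intro i j hij
    exact hg (sortDec_antitone x hij)
  · have : (fun i => g (x i)) = g ∘ x := rfl
    rw [this, ← Multiset.map_map g x]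
    have : (fun i => g (sortDec x i)) = g ∘ sortDec x := rfl
    rw [this, ← Multiset.map_map g (sortDec x), multiset_sortDec]


open Polynomial


variable {n : ℕ}

/-- Characteristic polynomial is invariant under conjugation by invertible matrices. -/
lemma charpoly_conj (W M V : Matrix (Fin n) (Fin n) ℂ) (hWV : W * V = 1) (hVW : V * W = 1) :
    (W * M * V).charpoly = M.charpoly := by
  have hscal : ∀ (A : Matrix (Fin n) (Fin n) ℂ[X]),
      A * Matrix.scalar (Fin n) (X : ℂ[X]) = Matrix.scalar (Fin n) (X : ℂ[X]) * A := by
    intro A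
    ext i j
    simp [Matrix.scalar_apply, Matrix.mul_diagonal, Matrix.diagonal_mul, mul_comm]
  have hcm : charmatrix (W * M * V)
      = (W.map C) * charmatrix M * (V.map C) := by
    unfold charmatrix
    rw [Matrix.mul_sub, Matrix.sub_mul]
    congr 1
    · have hmap : (W.map C) * (V.map C) = 1 := by
        rw [← Matrix.map_mul, hWV, Matrix.map_one _ (map_zero C) (map_one C)]
      calc Matrix.scalar (Fin n) (X : ℂ[X])
          = Matrix.scalar (Fin n) (X : ℂ[X]) * ((W.map C) * (V.map C)) := by
            rw [hmap, Matrix.mul_one]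
        _ = (W.map C) * Matrix.scalar (Fin n) (X : ℂ[X]) * (V.map C) := by
            rw [← Matrix.mul_assoc, ← hscal (W.map C)]
    · simp only [RingHom.mapMatrix_apply]
      rw [← Matrix.map_mul, ← Matrix.map_mul]
  unfold Matrix.charpoly
  rw [hcm, Matrix.det_mul, Matrix.det_mul]
  have hdet : (W.map C).det * (V.map C).det = 1 := by
    rw [← Matrix.det_mul, ← Matrix.map_mul, hWV, Matrix.map_one _ (map_zero C) (map_one C),
      Matrix.det_one]
  calc (W.map C).det * (charmatrix M).det * (V.map C).det
      = (W.map C).det * (V.map C).det * (charmatrix M).det := by ring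
    _ = (charmatrix M).det := by rw [hdet, one_mul]

lemma charpoly_diagonal (d : Fin n → ℂ) :
    (Matrix.diagonal d).charpoly = ∏ i, (X - C (d i)) := by
  rw [Matrix.charpoly_of_upperTriangular _ (Matrix.blockTriangular_diagonal d)]
  exact Finset.prod_congr rfl fun i _ => by rw [Matrix.diagonal_apply_eq]

/-- If `A = W * diagonal d * V` with `W * V = V * W = 1`, then the multiset of values of any
eigenvalue-tuple decomposition agrees with `d`'s multiset. -/
lemma multiset_eigenvalues_eq {A : Matrix (Fin n) (Fin n) ℂ} (hA : A.IsHermitian)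
    (W V : Matrix (Fin n) (Fin n) ℂ) (d : Fin n → ℝ) (hWV : W * V = 1) (hVW : V * W = 1)
    (hdec : A = W * Matrix.diagonal (fun i => (d i : ℂ)) * V) :
    Multiset.map hA.eigenvalues Finset.univ.val = Multiset.map d Finset.univ.val := by
  have h1 : A.charpoly = ∏ i, (X - C ((d i : ℂ))) := by
    rw [hdec, charpoly_conj _ _ _ hWV hVW, charpoly_diagonal]
  have h2 : A.charpoly = ∏ i, (X - C ((hA.eigenvalues i : ℂ))) := by
    have hU := hA.spectral_theorem
    have hWV' : (hA.eigenvectorUnitary : Matrix (Fin n) (Fin n) ℂ)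
        * (star (hA.eigenvectorUnitary : Matrix (Fin n) (Fin n) ℂ)) = 1 := by
      exact (Matrix.mem_unitaryGroup_iff).mp hA.eigenvectorUnitary.2
    have hVW' : (star (hA.eigenvectorUnitary : Matrix (Fin n) (Fin n) ℂ))
        * (hA.eigenvectorUnitary : Matrix (Fin n) (Fin n) ℂ) = 1 := by
      exact (Matrix.mem_unitaryGroup_iff').mp hA.eigenvectorUnitary.2
    calc A.charpoly
        = ((hA.eigenvectorUnitary : Matrix (Fin n) (Fin n) ℂ)
            * Matrix.diagonal (fun i => ((hA.eigenvalues i : ℂ)))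
            * (star (hA.eigenvectorUnitary : Matrix (Fin n) (Fin n) ℂ))).charpoly := by
          congr 1
      _ = ∏ i, (X - C ((hA.eigenvalues i : ℂ))) := by
          rw [charpoly_conj _ _ _ hWV' hVW', charpoly_diagonal]
  have h3 : (Multiset.map (fun i => ((hA.eigenvalues i : ℂ))) Finset.univ.val)
      = (Multiset.map (fun i => ((d i : ℂ))) Finset.univ.val) := by
    have e1 : ∏ i, (X - C ((hA.eigenvalues i : ℂ)))
        = (Multiset.map (fun a : ℂ => X - C a)
            (Multiset.map (fun i => ((hA.eigenvalues i : ℂ))) Finset.univ.val)).prod := by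
      rw [Multiset.map_map]
      rfl
    have e2 : ∏ i, (X - C ((d i : ℂ)))
        = (Multiset.map (fun a : ℂ => X - C a)
            (Multiset.map (fun i => ((d i : ℂ))) Finset.univ.val)).prod := by
      rw [Multiset.map_map]
      rfl
    have := h2.symm.trans h1
    rw [e1, e2] at this
    have r1 := Polynomial.roots_multiset_prod_X_sub_C
      (Multiset.map (fun i => ((hA.eigenvalues i : ℂ))) Finset.univ.val)
    have r2 := Polynomial.roots_multiset_prod_X_sub_C
      (Multiset.map (fun i => ((d i : ℂ))) Finset.univ.val)
    rw [← r1, ← r2, this]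
  have hinj : Function.Injective ((↑) : ℝ → ℂ) := Complex.ofReal_injective
  have : Multiset.map ((↑) : ℝ → ℂ) (Multiset.map hA.eigenvalues Finset.univ.val)
      = Multiset.map ((↑) : ℝ → ℂ) (Multiset.map d Finset.univ.val) := by
    rw [Multiset.map_map, Multiset.map_map]
    exact h3
  exact Multiset.map_injective hinj this



variable {n : ℕ}

lemma mem_unitary_mul_conjTranspose {W : Matrix (Fin n) (Fin n) ℂ}
    (hW : W ∈ Matrix.unitaryGroup (Fin n) ℂ) : W * Wᴴ = 1 :=
  (Matrix.mem_unitaryGroup_iff).mp hW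

lemma mem_unitary_conjTranspose_mul {W : Matrix (Fin n) (Fin n) ℂ}
    (hW : W ∈ Matrix.unitaryGroup (Fin n) ℂ) : Wᴴ * W = 1 :=
  (Matrix.mem_unitaryGroup_iff').mp hW

/-- Permuting the columns of a unitary is unitary. -/
lemma submatrix_unitary {W : Matrix (Fin n) (Fin n) ℂ}
    (hW : W ∈ Matrix.unitaryGroup (Fin n) ℂ) (σ : Equiv.Perm (Fin n)) :
    W.submatrix id ⇑σ ∈ Matrix.unitaryGroup (Fin n) ℂ := by
  rw [Matrix.mem_unitaryGroup_iff]
  have : star (W.submatrix id ⇑σ) = Wᴴ.submatrix ⇑σ id := by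
    rw [Matrix.star_eq_conjTranspose, Matrix.conjTranspose_submatrix]
  rw [this, Matrix.submatrix_mul_equiv W Wᴴ id σ id, mem_unitary_mul_conjTranspose hW]
  rfl

lemma conj_diag_submatrix (W : Matrix (Fin n) (Fin n) ℂ) (c : Fin n → ℂ)
    (σ : Equiv.Perm (Fin n)) :
    (W.submatrix id ⇑σ) * Matrix.diagonal (c ∘ ⇑σ) * (W.submatrix id ⇑σ)ᴴ
      = W * Matrix.diagonal c * Wᴴ := by
  rw [Matrix.conjTranspose_submatrix]
  have h1 : Matrix.diagonal (c ∘ ⇑σ) = (Matrix.diagonal c).submatrix ⇑σ ⇑σ :=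
    (Matrix.submatrix_diagonal_equiv c σ).symm
  rw [h1, Matrix.submatrix_mul_equiv W (Matrix.diagonal c) id σ ⇑σ,
    Matrix.submatrix_mul_equiv (W * Matrix.diagonal c) Wᴴ id σ id]
  rfl

/-- Sorted spectral decomposition: for any permutation `σ`, a Hermitian matrix is unitarily
conjugate to the diagonal of `eigsDec A ∘ σ`. -/
lemma exists_decomp {A : Matrix (Fin n) (Fin n) ℂ} (hA : A.IsHermitian)
    (σ : Equiv.Perm (Fin n)) :
    ∃ W ∈ Matrix.unitaryGroup (Fin n) ℂ,
      A = W * Matrix.diagonal (fun i => (eigsDec A (σ i) : ℂ)) * Wᴴ := by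
  classical
  set ev := hA.eigenvalues with hev
  set τ : Equiv.Perm (Fin n) := σ.trans (Fin.revPerm.trans (Tuple.sort ev)) with hτ
  set U : Matrix (Fin n) (Fin n) ℂ := (hA.eigenvectorUnitary : Matrix (Fin n) (Fin n) ℂ)
    with hU
  have hUmem : U ∈ Matrix.unitaryGroup (Fin n) ℂ := hA.eigenvectorUnitary.2
  refine ⟨U.submatrix id ⇑τ, submatrix_unitary hUmem τ, ?_⟩
  have hfun : (fun i => (eigsDec A (σ i) : ℂ)) = (fun i => (ev i : ℂ)) ∘ ⇑τ := by
    funext i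
    have : eigsDec A (σ i) = sortDec ev (σ i) := by
      rw [eigsDec, dif_pos hA]
    rw [this]
    rfl
  rw [hfun, conj_diag_submatrix U (fun i => (ev i : ℂ)) τ]
  have := hA.spectral_theorem
  rw [Unitary.conjStarAlgAut_apply, Matrix.star_eq_conjTranspose] at this
  exact this

lemma isHermitian_conj_diag (W : Matrix (Fin n) (Fin n) ℂ) (d : Fin n → ℝ) :
    (W * Matrix.diagonal (fun i => (d i : ℂ)) * Wᴴ).IsHermitian := by
  unfold Matrix.IsHermitian
  rw [Matrix.conjTranspose_mul, Matrix.conjTranspose_mul, Matrix.conjTranspose_conjTranspose,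
    Matrix.diagonal_conjTranspose]
  have : star (fun i => (d i : ℂ)) = fun i => (d i : ℂ) := by
    funext i
    simp [Complex.conj_ofReal]
  rw [this, Matrix.mul_assoc]

lemma posSemidef_conj_diag {W : Matrix (Fin n) (Fin n) ℂ} {d : Fin n → ℝ}
    (hd : ∀ i, 0 ≤ d i) :
    (W * Matrix.diagonal (fun i => (d i : ℂ)) * Wᴴ).PosSemidef := by
  apply Matrix.PosSemidef.mul_mul_conjTranspose_same
  rw [Matrix.posSemidef_diagonal_iff]
  intro i
  exact_mod_cast hd i

lemma eigsDec_of_decomp {A W : Matrix (Fin n) (Fin n) ℂ} {d : Fin n → ℝ}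
    (hW : W ∈ Matrix.unitaryGroup (Fin n) ℂ) (hd : Antitone d)
    (hdec : A = W * Matrix.diagonal (fun i => (d i : ℂ)) * Wᴴ) :
    eigsDec A = d := by
  have hA : A.IsHermitian := hdec ▸ isHermitian_conj_diag W d
  rw [eigsDec, dif_pos hA]
  exact sortDec_unique hd (multiset_eigenvalues_eq hA W Wᴴ d
    (mem_unitary_mul_conjTranspose hW) (mem_unitary_conjTranspose_mul hW) hdec)

lemma eigsDec_nonneg {A : Matrix (Fin n) (Fin n) ℂ} (hA : A.PosSemidef) (i : Fin n) :
    0 ≤ eigsDec A i := by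
  rw [eigsDec, dif_pos hA.isHermitian]
  exact hA.eigenvalues_nonneg _

lemma matSqrt_decomp {ρ W : Matrix (Fin n) (Fin n) ℂ} {d : Fin n → ℝ}
    (hρ : ρ.PosSemidef) (hW : W ∈ Matrix.unitaryGroup (Fin n) ℂ) (hd : ∀ i, 0 ≤ d i)
    (hdec : ρ = W * Matrix.diagonal (fun i => (d i : ℂ)) * Wᴴ) :
    matSqrt ρ = W * Matrix.diagonal (fun i => (Real.sqrt (d i) : ℂ)) * Wᴴ := by
  rw [matSqrt, dif_pos hρ]
  symm
  apply eq_sqrtOld_of_sq_eq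
  · exact posSemidef_conj_diag (fun i => Real.sqrt_nonneg _)
  · rw [pow_two]
    calc (W * Matrix.diagonal (fun i => (Real.sqrt (d i) : ℂ)) * Wᴴ)
          * (W * Matrix.diagonal (fun i => (Real.sqrt (d i) : ℂ)) * Wᴴ)
        = W * Matrix.diagonal (fun i => (Real.sqrt (d i) : ℂ))
          * (Wᴴ * W) * Matrix.diagonal (fun i => (Real.sqrt (d i) : ℂ)) * Wᴴ := by
          simp only [Matrix.mul_assoc]
      _ = W * (Matrix.diagonal (fun i => (Real.sqrt (d i) : ℂ))
          * Matrix.diagonal (fun i => (Real.sqrt (d i) : ℂ))) * Wᴴ := by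
          rw [mem_unitary_conjTranspose_mul hW, Matrix.mul_one]
          simp only [Matrix.mul_assoc]
      _ = ρ := by
          rw [Matrix.diagonal_mul_diagonal, hdec]
          have : (fun i => (Real.sqrt (d i) : ℂ) * (Real.sqrt (d i) : ℂ))
              = fun i => ((d i : ℝ) : ℂ) := by
            funext i
            rw [← Complex.ofReal_mul, Real.mul_self_sqrt (hd i)]
          rw [this]

lemma trace_conj_diag {W : Matrix (Fin n) (Fin n) ℂ}
    (hW : W ∈ Matrix.unitaryGroup (Fin n) ℂ) (c : Fin n → ℂ) :
    (W * Matrix.diagonal c * Wᴴ).trace = ∑ i, c i := by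
  rw [Matrix.trace_mul_cycle, mem_unitary_conjTranspose_mul hW,
    Matrix.one_mul, Matrix.trace_diagonal]


variable {n : ℕ}


lemma eigsDec_antitone (A : Matrix (Fin n) (Fin n) ℂ) : Antitone (eigsDec A) := by
  unfold eigsDec
  by_cases hA : A.IsHermitian
  · simp only [dif_pos hA]; exact sortDec_antitone _
  · simp only [dif_neg hA]; exact antitone_const

lemma eigsInc_monotone (A : Matrix (Fin n) (Fin n) ℂ) : Monotone (eigsInc A) := by
  intro i j hij
  exact eigsDec_antitone A (Fin.rev_le_rev.mpr hij)

lemma psd_diag_re_nonneg {M : Matrix (Fin n) (Fin n) ℂ} (hM : M.PosSemidef) (i : Fin n) :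
    0 ≤ (M i i).re := by
  have h := hM.dotProduct_mulVec_nonneg (Pi.single i 1)
  have : dotProduct (star (Pi.single i 1)) (M *ᵥ Pi.single i 1) = M i i := by
    rw [Matrix.mulVec_single]
    simp [dotProduct, Pi.single_apply]
  rw [this] at h
  exact (Complex.le_def.mp h).1

/-- `Re tr Y ≤ tr |Y|`. -/
lemma re_trace_le_traceAbs (Y : Matrix (Fin n) (Fin n) ℂ) : (Y.trace).re ≤ traceAbs Y := by
  classical
  set P := matAbs Y with hPdef
  have hP : P.PosSemidef := sqrtOld_psd (Matrix.posSemidef_conjTranspose_mul_self Y)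
  have hP2 : P ^ 2 = Yᴴ * Y := sqrtOld_sq (Matrix.posSemidef_conjTranspose_mul_self Y)
  set s := eigsDec P with hs
  have hs0 : ∀ i, 0 ≤ s i := fun i => eigsDec_nonneg hP i
  obtain ⟨W, hWmem, hdec⟩ := exists_decomp hP.isHermitian (Equiv.refl _)
  simp only [Equiv.refl_apply] at hdec
  -- traceAbs Y = ∑ s i
  have htr : traceAbs Y = ∑ i, s i := by
    rw [traceAbs, ← hPdef, hdec, trace_conj_diag hWmem]
    rw [Complex.re_sum]
    exact Finset.sum_congr rfl fun i _ => by simp [hs]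
  -- conjugated Y
  set Z := Wᴴ * Y * W with hZ
  have htrZ : Z.trace = Y.trace := by
    rw [hZ, Matrix.trace_mul_comm, ← Matrix.mul_assoc, mem_unitary_mul_conjTranspose hWmem,
      Matrix.one_mul]
  -- column norms
  have hcol1 : ∀ i : Fin n, ∑ k, ‖W k i‖ ^ 2 = 1 := by
    intro i
    have h1 : (Wᴴ * W) i i = 1 := by rw [mem_unitary_conjTranspose_mul hWmem]; simp
    have h2 : (Wᴴ * W) i i = ∑ k, star (W k i) * W k i := by
      rw [Matrix.mul_apply]
      exact Finset.sum_congr rfl fun k _ => rfl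
    have h3 : ((Wᴴ * W) i i).re = ∑ k, ‖W k i‖ ^ 2 := by
      rw [h2, Complex.re_sum]
      refine Finset.sum_congr rfl fun k _ => ?_
      have : star (W k i) * W k i = ((Complex.normSq (W k i) : ℝ) : ℂ) := by
        rw [Complex.star_def, ← Complex.normSq_eq_conj_mul_self]
      rw [this, Complex.ofReal_re, Complex.sq_norm]
    rw [← h3, h1]
    simp
  have hcol2 : ∀ i : Fin n, ∑ k, ‖(Y * W) k i‖ ^ 2 = s i ^ 2 := by
    intro i
    have key : (Y * W)ᴴ * (Y * W) = Matrix.diagonal (fun i => ((s i ^ 2 : ℝ) : ℂ)) := by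
      rw [Matrix.conjTranspose_mul]
      calc Wᴴ * Yᴴ * (Y * W) = Wᴴ * (Yᴴ * Y) * W := by simp only [Matrix.mul_assoc]
        _ = Wᴴ * (P * P) * W := by rw [← hP2, pow_two]
        _ = Wᴴ * (W * Matrix.diagonal (fun i => (s i : ℂ)) * Wᴴ
              * (W * Matrix.diagonal (fun i => (s i : ℂ)) * Wᴴ)) * W := by rw [← hdec]
        _ = (Wᴴ * W) * Matrix.diagonal (fun i => (s i : ℂ)) * (Wᴴ * W)
              * Matrix.diagonal (fun i => (s i : ℂ)) * (Wᴴ * W) := by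
            simp only [Matrix.mul_assoc]
        _ = Matrix.diagonal (fun i => (s i : ℂ)) * Matrix.diagonal (fun i => (s i : ℂ)) := by
            rw [mem_unitary_conjTranspose_mul hWmem]
            simp only [Matrix.one_mul, Matrix.mul_one]
        _ = Matrix.diagonal (fun i => ((s i ^ 2 : ℝ) : ℂ)) := by
            rw [Matrix.diagonal_mul_diagonal]
            have : (fun i => (s i : ℂ) * (s i : ℂ)) = fun i => ((s i ^ 2 : ℝ) : ℂ) := by
              funext i
              push_cast
              ring
            rw [this]
    have h2 : ((Y * W)ᴴ * (Y * W)) i i = ∑ k, star ((Y * W) k i) * ((Y * W) k i) := by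
      rw [Matrix.mul_apply]
      exact Finset.sum_congr rfl fun k _ => rfl
    have h3 : (((Y * W)ᴴ * (Y * W)) i i).re = ∑ k, ‖(Y * W) k i‖ ^ 2 := by
      rw [h2, Complex.re_sum]
      refine Finset.sum_congr rfl fun k _ => ?_
      have : star ((Y * W) k i) * ((Y * W) k i)
          = ((Complex.normSq ((Y * W) k i) : ℝ) : ℂ) := by
        rw [Complex.star_def, ← Complex.normSq_eq_conj_mul_self]
      rw [this, Complex.ofReal_re, Complex.sq_norm]
    rw [← h3, key]
    simp only [Matrix.diagonal_apply_eq, Complex.ofReal_re]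
  -- entry bound
  have hentry : ∀ i : Fin n, ‖Z i i‖ ≤ s i := by
    intro i
    have hZii : Z i i = ∑ k, star (W k i) * (Y * W) k i := by
      rw [hZ, Matrix.mul_assoc, Matrix.mul_apply]
      exact Finset.sum_congr rfl fun k _ => rfl
    have h1 : ‖Z i i‖ ≤ ∑ k, ‖W k i‖ * ‖(Y * W) k i‖ := by
      rw [hZii]
      refine le_trans (norm_sum_le _ _) ?_
      apply le_of_eq
      refine Finset.sum_congr rfl fun k _ => ?_
      rw [norm_mul, norm_star]
    have h2 : (∑ k, ‖W k i‖ * ‖(Y * W) k i‖) ^ 2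
        ≤ (∑ k, ‖W k i‖ ^ 2) * (∑ k, ‖(Y * W) k i‖ ^ 2) :=
      Finset.sum_mul_sq_le_sq_mul_sq _ _ _
    rw [hcol1 i, hcol2 i, one_mul] at h2
    have h4 : (∑ k, ‖W k i‖ * ‖(Y * W) k i‖) ≤ s i := by
      have hnn : 0 ≤ ∑ k, ‖W k i‖ * ‖(Y * W) k i‖ :=
        Finset.sum_nonneg fun k _ => mul_nonneg (norm_nonneg _) (norm_nonneg _)
      nlinarith [hs0 i]
    exact le_trans h1 h4
  -- conclude
  calc (Y.trace).re = (Z.trace).re := by rw [htrZ]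
    _ = ∑ i, (Z i i).re := by rw [Matrix.trace, Complex.re_sum]; rfl
    _ ≤ ∑ i, ‖Z i i‖ := Finset.sum_le_sum fun i _ => Complex.re_le_norm _
    _ ≤ ∑ i, s i := Finset.sum_le_sum fun i _ => hentry i
    _ = traceAbs Y := htr.symm

/-- Ky Fan-type lower bound: for `0 ≤ C ≤ 1` with `tr C = k`,
`tr(C B) ≥` sum of the `k` smallest eigenvalues of `B`. -/
lemma kyFan {B C : Matrix (Fin n) (Fin n) ℂ} (hB : B.IsHermitian)
    (hC : C.PosSemidef) (hC1 : (1 - C).PosSemidef) {k : ℕ} (hk : k ≤ n)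
    (htr : C.trace = (k : ℂ)) :
    S (eigsInc B) k ≤ ((C * B).trace).re := by
  classical
  obtain ⟨W, hWmem, hdec⟩ := exists_decomp hB Fin.revPerm
  set b := eigsInc B with hb
  have hfun : (fun i : Fin n => ((eigsDec B (Fin.revPerm i)) : ℂ))
      = (fun i => ((b i) : ℂ)) := by
    funext i
    rfl
  rw [hfun] at hdec
  set M := Wᴴ * C * W with hM
  have htrace : (C * B).trace = (M * Matrix.diagonal (fun i => (b i : ℂ))).trace := by
    calc (C * B).trace
        = ((C * W) * ((Matrix.diagonal fun i => (b i : ℂ)) * Wᴴ)).trace := by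
          rw [hdec]; simp only [Matrix.mul_assoc]
      _ = (((Matrix.diagonal fun i => (b i : ℂ)) * Wᴴ) * (C * W)).trace :=
          Matrix.trace_mul_comm _ _
      _ = ((Matrix.diagonal fun i => (b i : ℂ)) * (Wᴴ * C * W)).trace := by
          simp only [Matrix.mul_assoc]
      _ = (M * Matrix.diagonal (fun i => (b i : ℂ))).trace := Matrix.trace_mul_comm _ _
  have hMD : (M * Matrix.diagonal (fun i => (b i : ℂ))).trace = ∑ i, M i i * (b i : ℂ) := by
    rw [Matrix.trace]
    refine Finset.sum_congr rfl fun i _ => ?_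
    rw [Matrix.diag_apply, Matrix.mul_diagonal]
  set c : Fin n → ℝ := fun i => (M i i).re with hc
  have hre : ((C * B).trace).re = ∑ i, c i * b i := by
    rw [htrace, hMD, Complex.re_sum]
    refine Finset.sum_congr rfl fun i _ => ?_
    rw [Complex.mul_re]
    simp [hc]
  have hMpsd : M.PosSemidef := hC.conjTranspose_mul_mul_same W
  have hM1psd : (1 - M).PosSemidef := by
    have : (1 : Matrix (Fin n) (Fin n) ℂ) - M = Wᴴ * (1 - C) * W := by
      rw [Matrix.mul_sub, Matrix.sub_mul, Matrix.mul_one, mem_unitary_conjTranspose_mul hWmem,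
        hM]
    rw [this]
    exact hC1.conjTranspose_mul_mul_same W
  have hc0 : ∀ i, 0 ≤ c i := fun i => psd_diag_re_nonneg hMpsd i
  have hc1 : ∀ i, c i ≤ 1 := by
    intro i
    have := psd_diag_re_nonneg hM1psd i
    have h1 : ((1 - M) i i).re = 1 - c i := by
      rw [Matrix.sub_apply]
      simp [hc, Matrix.one_apply]
    rw [h1] at this
    linarith
  have hcsum : ∑ i, c i = k := by
    have h1 : M.trace = C.trace := by
      rw [hM, Matrix.trace_mul_comm, ← Matrix.mul_assoc, mem_unitary_mul_conjTranspose hWmem,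
        Matrix.one_mul]
    have h2 : (M.trace).re = ∑ i, c i := by
      rw [Matrix.trace, Complex.re_sum]; rfl
    rw [← h2, h1, htr]
    simp
  rw [hre]
  exact lp b c (eigsInc_monotone B) hc0 hc1 k hk hcsum


variable {n : ℕ}


lemma posSemidef_kraus_sum {r : ℕ} (F : Fin r → Matrix (Fin n) (Fin n) ℂ)
    {ρ : Matrix (Fin n) (Fin n) ℂ} (hρ : ρ.PosSemidef) :
    (∑ j, F j * ρ * (F j)ᴴ).PosSemidef := by
  classical
  exact Finset.sum_induction (fun j => F j * ρ * (F j)ᴴ) (fun A => A.PosSemidef)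
    (fun A B hA hB => hA.add hB) Matrix.PosSemidef.zero
    (fun j _ => hρ.mul_mul_conjTranspose_same (F j))

/-- The indicator weights for the bottom-`k` projection. -/
noncomputable def ind {n : ℕ} (k : ℕ) : Fin n → ℝ := fun i => if (i : ℕ) < k then 1 else 0

lemma ind_nonneg {k : ℕ} (i : Fin n) : 0 ≤ ind k i := by
  unfold ind; split <;> norm_num

lemma ind_le_one {k : ℕ} (i : Fin n) : ind k i ≤ 1 := by
  unfold ind; split <;> norm_num

lemma sum_ind_mul (k : ℕ) (b : Fin n → ℝ) : ∑ i, ind k i * b i = S b k := by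
  unfold S
  rw [Finset.sum_filter]
  refine Finset.sum_congr rfl fun i _ => ?_
  unfold ind
  split <;> simp

lemma sum_ind (k : ℕ) (hk : k ≤ n) : ∑ i : Fin n, ind k i = (k : ℝ) := by
  have h := sum_ind_mul (n := n) k (fun _ => 1)
  rw [S_one hk] at h
  simpa using h

/-- Bottom-`k` eigenvalue sums increase under a unital quantum channel (case `k ≤ n`). -/
lemma channel_bottom_aux {ρ : Matrix (Fin n) (Fin n) ℂ} (hρ : ρ.PosSemidef)
    {r : ℕ} (F : Fin r → Matrix (Fin n) (Fin n) ℂ)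
    (hTP : (∑ j, (F j)ᴴ * F j) = 1) (hUn : (∑ j, F j * (F j)ᴴ) = 1)
    {k : ℕ} (hk : k ≤ n) :
    S (eigsInc ρ) k ≤ S (eigsInc (∑ j, F j * ρ * (F j)ᴴ)) k := by
  classical
  set τ := ∑ j, F j * ρ * (F j)ᴴ with hτ
  have hτpsd : τ.PosSemidef := posSemidef_kraus_sum F hρ
  obtain ⟨W, hWmem, hdec⟩ := exists_decomp hτpsd.isHermitian Fin.revPerm
  have hfun : (fun i : Fin n => ((eigsDec τ (Fin.revPerm i)) : ℂ))
      = (fun i => ((eigsInc τ i) : ℂ)) := by funext i; rfl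
  rw [hfun] at hdec
  set b := eigsInc τ with hb
  set Q := W * Matrix.diagonal (fun i => ((ind k i : ℝ) : ℂ)) * Wᴴ with hQ
  have hQpsd : Q.PosSemidef := posSemidef_conj_diag (fun i => ind_nonneg i)
  -- trace of Q τ equals bottom-k sum of τ's eigenvalues
  have hQτ : Q * τ = W * Matrix.diagonal (fun i => ((ind k i * b i : ℝ) : ℂ)) * Wᴴ := by
    rw [hQ]
    conv_lhs => rw [hdec]
    calc W * Matrix.diagonal (fun i => ((ind k i : ℝ) : ℂ)) * Wᴴ
          * (W * Matrix.diagonal (fun i => (b i : ℂ)) * Wᴴ)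
        = W * Matrix.diagonal (fun i => ((ind k i : ℝ) : ℂ)) * (Wᴴ * W)
          * Matrix.diagonal (fun i => (b i : ℂ)) * Wᴴ := by simp only [Matrix.mul_assoc]
      _ = W * (Matrix.diagonal (fun i => ((ind k i : ℝ) : ℂ))
          * Matrix.diagonal (fun i => (b i : ℂ))) * Wᴴ := by
          rw [mem_unitary_conjTranspose_mul hWmem, Matrix.mul_one]
          simp only [Matrix.mul_assoc]
      _ = W * Matrix.diagonal (fun i => ((ind k i * b i : ℝ) : ℂ)) * Wᴴ := by
          rw [Matrix.diagonal_mul_diagonal]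
          have : (fun i => ((ind k i : ℝ) : ℂ) * ((b i : ℝ) : ℂ))
              = fun i => ((ind k i * b i : ℝ) : ℂ) := by
            funext i; push_cast; ring
          rw [this]
  have hStau : ((Q * τ).trace).re = S b k := by
    rw [hQτ, trace_conj_diag hWmem, Complex.re_sum, ← sum_ind_mul]
    refine Finset.sum_congr rfl fun i _ => by simp
  -- the adjoint-channel operator C
  set C := ∑ j, (F j)ᴴ * Q * F j with hC
  have hterm : ∀ j, ((F j)ᴴ * Q * F j * ρ).trace = (Q * (F j * ρ * (F j)ᴴ)).trace := by
    intro j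
    calc ((F j)ᴴ * Q * F j * ρ).trace
        = ((F j)ᴴ * (Q * F j * ρ)).trace := by simp only [Matrix.mul_assoc]
      _ = ((Q * F j * ρ) * (F j)ᴴ).trace := Matrix.trace_mul_comm _ _
      _ = (Q * (F j * ρ * (F j)ᴴ)).trace := by simp only [Matrix.mul_assoc]
  have htraceC : (C * ρ).trace = (Q * τ).trace := by
    rw [hC, hτ, Finset.sum_mul, Finset.mul_sum, Matrix.trace_sum, Matrix.trace_sum]
    exact Finset.sum_congr rfl fun j _ => hterm j
  -- C is PSD
  have hCpsd : C.PosSemidef := by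
    rw [hC]
    exact Finset.sum_induction (fun j => (F j)ᴴ * Q * F j) (fun A => A.PosSemidef)
      (fun A B hA hB => hA.add hB) Matrix.PosSemidef.zero
      (fun j _ => hQpsd.conjTranspose_mul_mul_same (F j))
  -- 1 - C is PSD
  have h1Q : (1 : Matrix (Fin n) (Fin n) ℂ) - Q
      = W * Matrix.diagonal (fun i => ((1 - ind k i : ℝ) : ℂ)) * Wᴴ := by
    have e : Matrix.diagonal (fun i : Fin n => ((1 - ind k i : ℝ) : ℂ))
        = 1 - Matrix.diagonal (fun i : Fin n => ((ind k i : ℝ) : ℂ)) := by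
      ext i j
      rcases eq_or_ne i j with rfl | hij
      · simp only [Matrix.diagonal_apply_eq, Matrix.sub_apply, Matrix.one_apply_eq]
        push_cast
        ring
      · simp [Matrix.diagonal_apply_ne _ hij, Matrix.one_apply_ne hij]
    rw [e, Matrix.mul_sub, Matrix.sub_mul, Matrix.mul_one, mem_unitary_mul_conjTranspose hWmem,
      hQ]
  have h1Qpsd : ((1 : Matrix (Fin n) (Fin n) ℂ) - Q).PosSemidef := by
    rw [h1Q]
    exact posSemidef_conj_diag (fun i => by linarith [ind_le_one (k := k) i])
  have hC1psd : ((1 : Matrix (Fin n) (Fin n) ℂ) - C).PosSemidef := by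
    have e : (1 : Matrix (Fin n) (Fin n) ℂ) - C = ∑ j, (F j)ᴴ * (1 - Q) * F j := by
      have : ∀ j, (F j)ᴴ * ((1 : Matrix (Fin n) (Fin n) ℂ) - Q) * F j
          = (F j)ᴴ * F j - (F j)ᴴ * Q * F j := by
        intro j
        rw [Matrix.mul_sub, Matrix.sub_mul, Matrix.mul_one]
      rw [Finset.sum_congr rfl (fun j _ => this j), Finset.sum_sub_distrib, hTP, hC]
    rw [e]
    exact Finset.sum_induction (fun j => (F j)ᴴ * (1 - Q) * F j) (fun A => A.PosSemidef)
      (fun A B hA hB => hA.add hB) Matrix.PosSemidef.zero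
      (fun j _ => h1Qpsd.conjTranspose_mul_mul_same (F j))
  -- trace of C is k
  have htrC : C.trace = (k : ℂ) := by
    have hterm2 : ∀ j, ((F j)ᴴ * Q * F j).trace = (Q * (F j * (F j)ᴴ)).trace := by
      intro j
      calc ((F j)ᴴ * Q * F j).trace
          = ((F j)ᴴ * (Q * F j)).trace := by simp only [Matrix.mul_assoc]
        _ = ((Q * F j) * (F j)ᴴ).trace := Matrix.trace_mul_comm _ _
        _ = (Q * (F j * (F j)ᴴ)).trace := by simp only [Matrix.mul_assoc]
    have h2 : C.trace = (Q * ∑ j, F j * (F j)ᴴ).trace := by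
      rw [hC, Matrix.trace_sum, Finset.mul_sum, Matrix.trace_sum]
      exact Finset.sum_congr rfl fun j _ => hterm2 j
    rw [h2, hUn, Matrix.mul_one, hQ, trace_conj_diag hWmem]
    have e3 : ∑ i : Fin n, ((ind k i : ℝ) : ℂ) = (((∑ i : Fin n, ind k i : ℝ)) : ℂ) := by
      push_cast
      rfl
    rw [e3, sum_ind k hk]
    norm_cast
  -- apply Ky Fan
  have hKF := kyFan hρ.isHermitian hCpsd hC1psd hk htrC
  calc S (eigsInc ρ) k ≤ ((C * ρ).trace).re := hKF
    _ = ((Q * τ).trace).re := by rw [htraceC]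
    _ = S b k := hStau

/-- Bottom-`k` eigenvalue sums increase under a unital quantum channel. -/
lemma channel_bottom {ρ : Matrix (Fin n) (Fin n) ℂ} (hρ : ρ.PosSemidef)
    {r : ℕ} (F : Fin r → Matrix (Fin n) (Fin n) ℂ)
    (hTP : (∑ j, (F j)ᴴ * F j) = 1) (hUn : (∑ j, F j * (F j)ᴴ) = 1)
    (k : ℕ) :
    S (eigsInc ρ) k ≤ S (eigsInc (∑ j, F j * ρ * (F j)ᴴ)) k := by
  rcases le_or_gt k n with hk | hk
  · exact channel_bottom_aux hρ F hTP hUn hk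
  · rw [S_sat _ (le_of_lt hk), S_sat _ (le_of_lt hk)]
    exact channel_bottom_aux hρ F hTP hUn le_rfl


variable {n : ℕ}



/-- Cyclic trace identity for conjugated-diagonal times a matrix. -/
lemma trace_conjdiag_mul {W : Matrix (Fin n) (Fin n) ℂ} (c : Fin n → ℂ)
    (B : Matrix (Fin n) (Fin n) ℂ) :
    ((W * Matrix.diagonal c * Wᴴ) * B).trace = ((Wᴴ * B * W) * Matrix.diagonal c).trace := by
  calc ((W * Matrix.diagonal c * Wᴴ) * B).trace
      = ((W * Matrix.diagonal c) * (Wᴴ * B)).trace := by simp only [Matrix.mul_assoc]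
    _ = ((Wᴴ * B) * (W * Matrix.diagonal c)).trace := Matrix.trace_mul_comm _ _
    _ = ((Wᴴ * B * W) * Matrix.diagonal c).trace := by simp only [Matrix.mul_assoc]

lemma trace_mul_diag (M : Matrix (Fin n) (Fin n) ℂ) (c : Fin n → ℂ) :
    (M * Matrix.diagonal c).trace = ∑ i, M i i * c i := by
  rw [Matrix.trace]
  refine Finset.sum_congr rfl fun i _ => ?_
  rw [Matrix.diag_apply, Matrix.mul_diagonal]

/-- `1 - W diag(ind k) Wᴴ` rewritten as a conjugated diagonal. -/
lemma one_sub_proj {W : Matrix (Fin n) (Fin n) ℂ}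
    (hW : W ∈ Matrix.unitaryGroup (Fin n) ℂ) (k : ℕ) :
    (1 : Matrix (Fin n) (Fin n) ℂ) - W * Matrix.diagonal (fun i => ((ind k i : ℝ) : ℂ)) * Wᴴ
      = W * Matrix.diagonal (fun i => ((1 - ind k i : ℝ) : ℂ)) * Wᴴ := by
  have e : Matrix.diagonal (fun i : Fin n => ((1 - ind k i : ℝ) : ℂ))
      = 1 - Matrix.diagonal (fun i : Fin n => ((ind k i : ℝ) : ℂ)) := by
    ext i j
    rcases eq_or_ne i j with rfl | hij
    · simp only [Matrix.diagonal_apply_eq, Matrix.sub_apply, Matrix.one_apply_eq]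
      push_cast
      ring
    · simp [Matrix.diagonal_apply_ne _ hij, Matrix.one_apply_ne hij]
  rw [e, Matrix.mul_sub, Matrix.sub_mul, Matrix.mul_one, mem_unitary_mul_conjTranspose hW]

lemma trace_proj {W : Matrix (Fin n) (Fin n) ℂ}
    (hW : W ∈ Matrix.unitaryGroup (Fin n) ℂ) {k : ℕ} (hk : k ≤ n) :
    (W * Matrix.diagonal (fun i => ((ind k i : ℝ) : ℂ)) * Wᴴ).trace = (k : ℂ) := by
  rw [trace_conj_diag hW]
  have e3 : ∑ i : Fin n, ((ind k i : ℝ) : ℂ) = (((∑ i : Fin n, ind k i : ℝ)) : ℂ) := by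
    push_cast
    rfl
  rw [e3, sum_ind k hk]
  norm_cast

/-- Main inequality: the fidelity with any unital-channel output dominates the
cross sum of decreasing/increasing eigenvalues. -/
lemma lower_bound (ρ1 ρ2 : Matrix (Fin n) (Fin n) ℂ)
    (h1 : IsDensityMatrix ρ1) (h2 : IsDensityMatrix ρ2)
    (Φ : Matrix (Fin n) (Fin n) ℂ → Matrix (Fin n) (Fin n) ℂ) (hΦ : IsUnitalChannel Φ) :
    (∑ j, Real.sqrt (eigsDec ρ1 j) * Real.sqrt (eigsDec ρ2 j.rev)) ≤ fidelity ρ1 (Φ ρ2) := by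
  classical
  obtain ⟨⟨r, F, hTP, hform⟩, hunit⟩ := hΦ
  have hUn : (∑ j, F j * (F j)ᴴ) = 1 := by
    have h := (hform 1).symm.trans hunit
    rw [← h]
    exact Finset.sum_congr rfl fun j _ => by rw [Matrix.mul_one]
  set τ := Φ ρ2 with hτdef
  have hτform : τ = ∑ j, F j * ρ2 * (F j)ᴴ := hform ρ2
  have hτpsd : τ.PosSemidef := by rw [hτform]; exact posSemidef_kraus_sum F h2.1
  -- decompose ρ1 and get matSqrt ρ1
  obtain ⟨W, hWmem, hdecρ1⟩ := exists_decomp h1.1.isHermitian (Equiv.refl _)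
  simp only [Equiv.refl_apply] at hdecρ1
  have hd1nn : ∀ i, 0 ≤ eigsDec ρ1 i := fun i => eigsDec_nonneg h1.1 i
  set a : Fin n → ℝ := fun i => Real.sqrt (eigsDec ρ1 i) with ha
  have hA : matSqrt ρ1 = W * Matrix.diagonal (fun i => ((a i : ℝ) : ℂ)) * Wᴴ :=
    matSqrt_decomp h1.1 hWmem hd1nn hdecρ1
  set B := matSqrt τ with hB
  have hBpsd : B.PosSemidef := by
    rw [hB, matSqrt, dif_pos hτpsd]
    exact sqrtOld_psd _
  -- eigenvalues of B are sqrt of eigenvalues of τ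
  obtain ⟨V, hVmem, hdecτ⟩ := exists_decomp hτpsd.isHermitian (Equiv.refl _)
  simp only [Equiv.refl_apply] at hdecτ
  have hBdec : B = V * Matrix.diagonal (fun i => ((Real.sqrt (eigsDec τ i) : ℝ) : ℂ)) * Vᴴ :=
    matSqrt_decomp hτpsd hVmem (fun i => eigsDec_nonneg hτpsd i) hdecτ
  have heigsB : eigsDec B = fun i => Real.sqrt (eigsDec τ i) := by
    refine eigsDec_of_decomp hVmem ?_ hBdec
    intro i j hij
    exact Real.sqrt_le_sqrt (eigsDec_antitone τ hij)
  have heigsIncB : eigsInc B = fun i => Real.sqrt (eigsInc τ i) := by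
    funext i
    show eigsDec B i.rev = _
    rw [heigsB]
    rfl
  -- the diagonal entries q
  set M := Wᴴ * B * W with hM
  set q : Fin n → ℝ := fun i => (M i i).re with hq
  have htrAB : ((matSqrt ρ1 * B).trace).re = ∑ i, a i * q i := by
    rw [hA, trace_conjdiag_mul, ← hM, trace_mul_diag, Complex.re_sum]
    refine Finset.sum_congr rfl fun i _ => ?_
    rw [Complex.mul_re]
    simp [hq, mul_comm]
  -- partial sums of q dominate those of eigsInc B
  have hq_dom : ∀ k, k ≤ n → S (eigsInc B) k ≤ S q k := by
    intro k hk
    set Q := W * Matrix.diagonal (fun i => ((ind k i : ℝ) : ℂ)) * Wᴴ with hQ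
    have hQpsd : Q.PosSemidef := posSemidef_conj_diag (fun i => ind_nonneg i)
    have hQ1psd : ((1 : Matrix (Fin n) (Fin n) ℂ) - Q).PosSemidef := by
      rw [hQ, one_sub_proj hWmem k]
      exact posSemidef_conj_diag (fun i => by linarith [ind_le_one (n := n) (k := k) i])
    have hQtr : Q.trace = (k : ℂ) := trace_proj hWmem hk
    have hKF := kyFan hBpsd.isHermitian hQpsd hQ1psd hk hQtr
    have htrQB : ((Q * B).trace).re = S q k := by
      rw [hQ, trace_conjdiag_mul, ← hM, trace_mul_diag, Complex.re_sum, ← sum_ind_mul k q]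
      refine Finset.sum_congr rfl fun i _ => ?_
      rw [Complex.mul_re]
      simp [hq, mul_comm]
    rw [htrQB] at hKF
    exact hKF
  -- partial sums of sqrt eigsInc ρ2 are dominated by those of q
  have hkey : ∀ k, S (fun i => Real.sqrt (eigsInc ρ2 i)) k ≤ S q k := by
    intro k
    rcases le_or_gt k n with hk | hk
    · calc S (fun i => Real.sqrt (eigsInc ρ2 i)) k
          ≤ S (fun i => Real.sqrt (eigsInc τ i)) k := by
            apply sqrt_transfer (eigsInc ρ2) (eigsInc τ) (eigsInc_monotone τ)
              (fun i => eigsDec_nonneg h2.1 _) (fun i => eigsDec_nonneg hτpsd _) ?_ k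
            intro m
            have := channel_bottom h2.1 F hTP hUn m
            rw [← hτform] at this
            exact this
        _ = S (eigsInc B) k := by rw [heigsIncB]
        _ ≤ S q k := hq_dom k hk
    · rw [S_sat _ (le_of_lt hk), S_sat _ (le_of_lt hk)]
      calc S (fun i => Real.sqrt (eigsInc ρ2 i)) n
          ≤ S (fun i => Real.sqrt (eigsInc τ i)) n := by
            apply sqrt_transfer (eigsInc ρ2) (eigsInc τ) (eigsInc_monotone τ)
              (fun i => eigsDec_nonneg h2.1 _) (fun i => eigsDec_nonneg hτpsd _) ?_ n
            intro m
            have := channel_bottom h2.1 F hTP hUn m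
            rw [← hτform] at this
            exact this
        _ = S (eigsInc B) n := by rw [heigsIncB]
        _ ≤ S q n := hq_dom n le_rfl
  -- Abel summation
  have habel := abel_fin a (fun i => q i - Real.sqrt (eigsInc ρ2 i))
    (fun i j hij => Real.sqrt_le_sqrt (eigsDec_antitone ρ1 hij))
    (fun i => Real.sqrt_nonneg _)
    (by
      intro k
      rw [S_sub]
      have := hkey k
      linarith)
  have hfinal : ∑ i, a i * Real.sqrt (eigsInc ρ2 i) ≤ ∑ i, a i * q i := by
    have e : ∑ i, a i * (q i - Real.sqrt (eigsInc ρ2 i))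
        = ∑ i, a i * q i - ∑ i, a i * Real.sqrt (eigsInc ρ2 i) := by
      rw [← Finset.sum_sub_distrib]
      exact Finset.sum_congr rfl fun i _ => by ring
    rw [e] at habel
    linarith
  -- conclude
  have hgoal : (∑ j, Real.sqrt (eigsDec ρ1 j) * Real.sqrt (eigsDec ρ2 j.rev))
      = ∑ i, a i * Real.sqrt (eigsInc ρ2 i) := rfl
  rw [hgoal]
  calc ∑ i, a i * Real.sqrt (eigsInc ρ2 i)
      ≤ ∑ i, a i * q i := hfinal
    _ = ((matSqrt ρ1 * B).trace).re := htrAB.symm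
    _ ≤ traceAbs (matSqrt ρ1 * B) := re_trace_le_traceAbs _
    _ = fidelity ρ1 (Φ ρ2) := rfl


variable {n : ℕ}

/-- `|X| = X` for a PSD matrix `X`. -/
lemma matAbs_of_posSemidef {X : Matrix (Fin n) (Fin n) ℂ} (hX : X.PosSemidef) :
    matAbs X = X := by
  rw [matAbs]
  symm
  apply eq_sqrtOld_of_sq_eq hX
  rw [pow_two, hX.isHermitian.eq]

/-- The equality witness: a unitary achieving the minimal fidelity. -/
lemma equality_case (ρ1 ρ2 : Matrix (Fin n) (Fin n) ℂ)
    (h1 : IsDensityMatrix ρ1) (h2 : IsDensityMatrix ρ2) :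
    ∃ U ∈ Matrix.unitaryGroup (Fin n) ℂ,
      fidelity ρ1 (U * ρ2 * Uᴴ) =
        ∑ j, Real.sqrt (eigsDec ρ1 j) * Real.sqrt (eigsDec ρ2 j.rev) := by
  classical
  obtain ⟨W1, hW1, hdec1⟩ := exists_decomp h1.1.isHermitian (Equiv.refl _)
  simp only [Equiv.refl_apply] at hdec1
  obtain ⟨W2, hW2, hdec2⟩ := exists_decomp h2.1.isHermitian Fin.revPerm
  set e2 : Fin n → ℝ := fun i => eigsDec ρ2 i.rev with he2
  have hfun : (fun i : Fin n => ((eigsDec ρ2 (Fin.revPerm i)) : ℂ))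
      = (fun i => ((e2 i) : ℂ)) := by funext i; rfl
  rw [hfun] at hdec2
  have he2nn : ∀ i, 0 ≤ e2 i := fun i => eigsDec_nonneg h2.1 _
  have hd1nn : ∀ i, 0 ≤ eigsDec ρ1 i := fun i => eigsDec_nonneg h1.1 _
  set U := W1 * W2ᴴ with hU
  have hUmem : U ∈ Matrix.unitaryGroup (Fin n) ℂ := by
    rw [hU]
    exact mul_mem hW1 (Unitary.star_mem hW2)
  refine ⟨U, hUmem, ?_⟩
  -- the conjugated state
  have hUH : Uᴴ = W2 * W1ᴴ := by
    rw [hU, Matrix.conjTranspose_mul, Matrix.conjTranspose_conjTranspose]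
  have hconj : U * ρ2 * Uᴴ = W1 * Matrix.diagonal (fun i => ((e2 i : ℝ) : ℂ)) * W1ᴴ := by
    rw [hU, hUH]
    conv_lhs => rw [hdec2]
    calc W1 * W2ᴴ * (W2 * Matrix.diagonal (fun i => ((e2 i : ℝ) : ℂ)) * W2ᴴ) * (W2 * W1ᴴ)
        = W1 * (W2ᴴ * W2) * Matrix.diagonal (fun i => ((e2 i : ℝ) : ℂ)) * (W2ᴴ * W2) * W1ᴴ := by
          simp only [Matrix.mul_assoc]
      _ = W1 * Matrix.diagonal (fun i => ((e2 i : ℝ) : ℂ)) * W1ᴴ := by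
          rw [mem_unitary_conjTranspose_mul hW2]
          simp only [Matrix.mul_one, Matrix.one_mul, Matrix.mul_assoc]
  set σ := U * ρ2 * Uᴴ with hσ
  have hσpsd : σ.PosSemidef := by
    rw [hconj]
    exact posSemidef_conj_diag he2nn
  -- square roots
  have hS1 : matSqrt ρ1 = W1 * Matrix.diagonal (fun i => ((Real.sqrt (eigsDec ρ1 i) : ℝ) : ℂ))
      * W1ᴴ := matSqrt_decomp h1.1 hW1 hd1nn hdec1
  have hS2 : matSqrt σ = W1 * Matrix.diagonal (fun i => ((Real.sqrt (e2 i) : ℝ) : ℂ)) * W1ᴴ :=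
    matSqrt_decomp hσpsd hW1 he2nn hconj
  -- product
  set g : Fin n → ℝ := fun i => Real.sqrt (eigsDec ρ1 i) * Real.sqrt (e2 i) with hg
  have hgnn : ∀ i, 0 ≤ g i := fun i => mul_nonneg (Real.sqrt_nonneg _) (Real.sqrt_nonneg _)
  have hprod : matSqrt ρ1 * matSqrt σ
      = W1 * Matrix.diagonal (fun i => ((g i : ℝ) : ℂ)) * W1ᴴ := by
    rw [hS1, hS2]
    calc W1 * Matrix.diagonal (fun i => ((Real.sqrt (eigsDec ρ1 i) : ℝ) : ℂ)) * W1ᴴ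
        * (W1 * Matrix.diagonal (fun i => ((Real.sqrt (e2 i) : ℝ) : ℂ)) * W1ᴴ)
        = W1 * Matrix.diagonal (fun i => ((Real.sqrt (eigsDec ρ1 i) : ℝ) : ℂ)) * (W1ᴴ * W1)
          * Matrix.diagonal (fun i => ((Real.sqrt (e2 i) : ℝ) : ℂ)) * W1ᴴ := by
          simp only [Matrix.mul_assoc]
      _ = W1 * (Matrix.diagonal (fun i => ((Real.sqrt (eigsDec ρ1 i) : ℝ) : ℂ))
          * Matrix.diagonal (fun i => ((Real.sqrt (e2 i) : ℝ) : ℂ))) * W1ᴴ := by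
          rw [mem_unitary_conjTranspose_mul hW1, Matrix.mul_one]
          simp only [Matrix.mul_assoc]
      _ = W1 * Matrix.diagonal (fun i => ((g i : ℝ) : ℂ)) * W1ᴴ := by
          rw [Matrix.diagonal_mul_diagonal]
          have : (fun i => ((Real.sqrt (eigsDec ρ1 i) : ℝ) : ℂ) * ((Real.sqrt (e2 i) : ℝ) : ℂ))
              = fun i => ((g i : ℝ) : ℂ) := by
            funext i
            rw [hg]
            push_cast
            ring
          rw [this]
  have hprodpsd : (matSqrt ρ1 * matSqrt σ).PosSemidef := by
    rw [hprod]
    exact posSemidef_conj_diag hgnn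
  -- conclude
  show traceAbs (matSqrt ρ1 * matSqrt σ) = _
  rw [traceAbs, matAbs_of_posSemidef hprodpsd, hprod, trace_conj_diag hW1, Complex.re_sum]
  refine Finset.sum_congr rfl fun i _ => ?_
  simp [hg]


end Stmt14

/-- The minimum of the fidelity `F(ρ1, Φ(ρ2))` over unital channels `Φ`
equals `Σ √(λ_j(ρ1)) √(λ_{n-j+1}(ρ2))`, attained by a unitary channel. -/
theorem stmt_14 {n : ℕ} (ρ1 ρ2 : Matrix (Fin n) (Fin n) ℂ)
    (h1 : IsDensityMatrix ρ1) (h2 : IsDensityMatrix ρ2) :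
    (∀ Φ, IsUnitalChannel Φ →
        (∑ j, Real.sqrt (eigsDec ρ1 j) * Real.sqrt (eigsDec ρ2 j.rev)) ≤
          fidelity ρ1 (Φ ρ2)) ∧
      ∃ U ∈ Matrix.unitaryGroup (Fin n) ℂ,
        fidelity ρ1 (U * ρ2 * Uᴴ) =
          ∑ j, Real.sqrt (eigsDec ρ1 j) * Real.sqrt (eigsDec ρ2 j.rev)  :=
  ⟨fun Φ hΦ => Stmt14.lower_bound ρ1 ρ2 h1 h2 Φ hΦ, Stmt14.equality_case ρ1 ρ2 h1 h2⟩
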